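/- Let M be a countable 2-level poset whose comparability graph is connected and locally 2-arc-transitive, and suppose that for every x ∈ Min(M) and y ∈ Max(M) with x < y the interval [x,y]^{M^+} is order-isomorphic to 1 + ℤ + 1. Then ↑Ram(M) = ↓Ram(M) = M^+ \ M = M^D \ M; in particular M^+ = M^D and no element of M is a ramification point of M. -/

import Mathlib

set_option autoImplicit false

section Preamble

/-- A *cut* of a poset `M`: a nonempty subset, bounded above, which equals the set of
lower bounds of its set of upper bounds. -/
def IsCut {M : Type*} [PartialOrder M] (J : Set M) : Prop :=
  J.Nonempty ∧ (upperBounds J).Nonempty ∧ lowerBounds (upperBounds J) = J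

/-- The Dedekind–MacNeille completion of `M`: the set of cuts, ordered by inclusion. -/
abbrev DMC (M : Type*) [PartialOrder M] : Type _ := {J : Set M // IsCut J}

/-- The canonical embedding of `M` into `DMC M`, `a ↦ {x | x ≤ a}`. -/
def principalCut {M : Type*} [PartialOrder M] (a : M) : DMC M :=
  ⟨Set.Iic a, ⟨a, le_refl a⟩, ⟨a, fun _ hx => hx⟩, by
    apply Set.Subset.antisymm
    · intro x hx
      exact hx (fun _ hy => hy)
    · exact subset_lowerBounds_upperBounds _⟩

/-- The image of `M` in its Dedekind–MacNeille completion (the principal cuts). -/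
def principalSet (M : Type*) [PartialOrder M] : Set (DMC M) :=
  Set.range (fun a : M => principalCut a)

/-- A 2-level poset: every element is minimal or maximal. -/
def IsTwoLevel (M : Type*) [PartialOrder M] : Prop :=
  ∀ x : M, IsMin x ∨ IsMax x

/-- The set `Min(M)` of minimal elements. -/
def minSet (M : Type*) [PartialOrder M] : Set M := {x | IsMin x}

/-- The set `Max(M)` of maximal elements. -/
def maxSet (M : Type*) [PartialOrder M] : Set M := {x | IsMax x}

/-- The comparability graph of a poset: `x` adjacent to `y` iff `x < y` or `y < x`. -/
def compGraph (M : Type*) [PartialOrder M] : SimpleGraph M where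
  Adj x y := x < y ∨ y < x
  symm := ⟨fun _ _ h => Or.symm h⟩
  loopless := ⟨fun x h => by rcases h with h | h <;> exact lt_irrefl x h⟩

/-- Upward ramification points of `M`: infima in `DMC M` of two incomparable elements of `M`. -/
def upRam (M : Type*) [PartialOrder M] : Set (DMC M) :=
  {p | ∃ a b : M, ¬ a ≤ b ∧ ¬ b ≤ a ∧ IsGLB {principalCut a, principalCut b} p}

/-- Downward ramification points of `M`: suprema in `DMC M` of two incomparable elements of `M`. -/
def downRam (M : Type*) [PartialOrder M] : Set (DMC M) :=
  {p | ∃ a b : M, ¬ a ≤ b ∧ ¬ b ≤ a ∧ IsLUB {principalCut a, principalCut b} p}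

/-- `M⁺ = M ∪ Ram(M)`, as a subset of `DMC M`. -/
def MPlus (M : Type*) [PartialOrder M] : Set (DMC M) :=
  principalSet M ∪ upRam M ∪ downRam M

/-- A 2-arc in a graph. -/
def IsTwoArc {V : Type*} (G : SimpleGraph V) (v₀ v₁ v₂ : V) : Prop :=
  G.Adj v₀ v₁ ∧ G.Adj v₁ v₂ ∧ v₀ ≠ v₂

/-- Local 1-arc-transitivity: every vertex stabilizer is transitive on neighbours. -/
def LocallyOneArcTransitive {V : Type*} (G : SimpleGraph V) : Prop :=
  ∀ v u w : V, G.Adj v u → G.Adj v w → ∃ g : G ≃g G, g v = v ∧ g u = w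

/-- Local 2-arc-transitivity: every vertex stabilizer is transitive on 2-arcs from that vertex. -/
def LocallyTwoArcTransitive {V : Type*} (G : SimpleGraph V) : Prop :=
  ∀ v u₁ w₁ u₂ w₂ : V, IsTwoArc G v u₁ w₁ → IsTwoArc G v u₂ w₂ →
    ∃ g : G ≃g G, g v = v ∧ g u₁ = u₂ ∧ g w₁ = w₂

/-- (Global) 1-arc-transitivity of a graph. -/
def OneArcTransitive {V : Type*} (G : SimpleGraph V) : Prop :=
  ∀ v₀ v₁ u₀ u₁ : V, G.Adj v₀ v₁ → G.Adj u₀ u₁ →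
    ∃ g : G ≃g G, g v₀ = u₀ ∧ g v₁ = u₁

/-- (Global) 2-arc-transitivity of a graph. -/
def TwoArcTransitive {V : Type*} (G : SimpleGraph V) : Prop :=
  ∀ v₀ v₁ v₂ u₀ u₁ u₂ : V, IsTwoArc G v₀ v₁ v₂ → IsTwoArc G u₀ u₁ u₂ →
    ∃ g : G ≃g G, g v₀ = u₀ ∧ g v₁ = u₁ ∧ g v₂ = u₂

/-- 3-CS-homogeneity: every isomorphism between connected 3-element induced subposets
extends to an automorphism. -/
def ThreeCSHomogeneous (M : Type*) [PartialOrder M] : Prop :=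
  ∀ A B : Set M, A.ncard = 3 → B.ncard = 3 →
    ((compGraph M).induce A).Connected → ((compGraph M).induce B).Connected →
    ∀ f : ↥A ≃o ↥B, ∃ g : M ≃o M, ∀ a : ↥A, g ↑a = ↑(f a)

/-- 2-CS-transitivity: the automorphism group is transitive on comparable pairs. -/
def TwoCSTransitive (M : Type*) [PartialOrder M] : Prop :=
  ∀ a b a' b' : M, a < b → a' < b' → ∃ g : M ≃o M, g a = a' ∧ g b = b'

/-- 3-CS-transitivity: for any two isomorphic connected 3-element induced subposets there
is an automorphism carrying one onto the other. -/
def ThreeCSTransitive (M : Type*) [PartialOrder M] : Prop :=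
  ∀ A B : Set M, A.ncard = 3 → B.ncard = 3 →
    ((compGraph M).induce A).Connected → ((compGraph M).induce B).Connected →
    Nonempty (↥A ≃o ↥B) → ∃ g : M ≃o M, ⇑g '' A = B

/-- A subset of a poset is a `k`-diamond if it consists of a least element, a greatest
element, and exactly `k` pairwise incomparable elements strictly in between. -/
def IsKDiamond {P : Type*} [PartialOrder P] (s : Set P) (k : ℕ) : Prop :=
  ∃ a b : P, a ∈ s ∧ b ∈ s ∧ a ≠ b ∧ (∀ z ∈ s, a ≤ z ∧ z ≤ b) ∧
    (s \ {a, b}).ncard = k ∧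
    ∀ z ∈ s \ ({a, b} : Set P), ∀ w ∈ s \ ({a, b} : Set P), z ≠ w → ¬ z ≤ w

end Preamble

section Helpers
variable {M : Type*} [PartialOrder M]

lemma DMC.le_def {p q : DMC M} : p ≤ q ↔ p.val ⊆ q.val := Iff.rfl

lemma principalCut_val (a : M) : (principalCut a).val = Set.Iic a := rfl

lemma principalCut_le_iff {a b : M} : principalCut a ≤ principalCut b ↔ a ≤ b := by
  constructor
  · intro h; exact h (le_refl a)
  · intro h; exact fun z hz => le_trans hz h

lemma mem_principalSet_of_val {p : DMC M} (a : M) (h : p.val = Set.Iic a) :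
    p ∈ principalSet M := ⟨a, Subtype.ext h.symm⟩

lemma isCut_lowerBounds {T : Set M} (hT : T.Nonempty) (hlb : (lowerBounds T).Nonempty) :
    IsCut (lowerBounds T) := by
  obtain ⟨t, ht⟩ := hT
  refine ⟨hlb, ⟨t, fun z hz => hz ht⟩, ?_⟩
  apply Set.Subset.antisymm
  · intro z hz t' ht'
    exact hz (fun w hw => hw ht')
  · exact subset_lowerBounds_upperBounds _

lemma lowerBounds_pair' {a b : M} : lowerBounds {a, b} = Set.Iic a ∩ Set.Iic b := by
  rw [lowerBounds_insert, lowerBounds_singleton]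

lemma lowerBounds_Ici' (a : M) : lowerBounds (Set.Ici a) = Set.Iic a := by
  ext z
  constructor
  · intro h; exact h (le_refl a)
  · intro h w hw; exact le_trans h hw

lemma lB_uB_singleton (a : M) : lowerBounds (upperBounds ({a} : Set M)) = Set.Iic a := by
  rw [upperBounds_singleton, lowerBounds_Ici']

/-- If `x ∈ J` for a cut `J`, then `Iic x ⊆ J`. -/
lemma Iic_subset_cut {J : Set M} (hJ : IsCut J) {x : M} (hx : x ∈ J) : Set.Iic x ⊆ J := by
  intro z hz
  rw [← hJ.2.2]
  intro w hw
  exact le_trans hz (hw hx)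

/-- A cut with a greatest element is principal. -/
lemma cut_eq_Iic_of_greatest {J : Set M} (hJ : IsCut J) {x : M} (hx : x ∈ J)
    (hub : x ∈ upperBounds J) : J = Set.Iic x := by
  apply Set.Subset.antisymm
  · intro z hz; exact hub hz
  · exact Iic_subset_cut hJ hx

/-- A cut whose set of upper bounds is `{y}` equals `Iic y`. -/
lemma cut_eq_Iic_of_ub {J : Set M} (hJ : IsCut J) {y : M} (h : upperBounds J = {y}) :
    J = Set.Iic y := by
  rw [← hJ.2.2, h, lowerBounds_singleton]

lemma cut_mem_imp_eq_Iic {J : Set M} (hJ : IsCut J) {y : M} (hyJ : y ∈ J)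
    (hsub : J ⊆ Set.Iic y) : J = Set.Iic y := by
  apply Set.Subset.antisymm hsub
  intro z hz
  rw [← hJ.2.2]
  intro w hw
  exact le_trans hz (hw hyJ)

lemma isMin_of_lt (h2lev : IsTwoLevel M) {x y : M} (h : x < y) : IsMin x :=
  (h2lev x).resolve_right (fun hm => (hm.not_lt h))

lemma isMax_of_lt (h2lev : IsTwoLevel M) {x y : M} (h : x < y) : IsMax y :=
  (h2lev y).resolve_left (fun hm => (hm.not_lt h))

lemma Iic_isMin {x : M} (hx : IsMin x) : Set.Iic x = {x} := by
  ext z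
  simp only [Set.mem_Iic, Set.mem_singleton_iff]
  exact ⟨fun h => le_antisymm h (hx h), fun h => h.le⟩

end Helpers
section ZChain

local notation "Zbar" => WithBot (WithTop ℤ)

lemma le_coe_top' (z : Zbar) : z ≤ ((⊤ : WithTop ℤ) : Zbar) := by
  induction z using WithBot.recBotCoe with
  | bot => exact bot_le
  | coe t => exact WithBot.coe_le_coe.mpr le_top

lemma not_coe_top_le_coe_int (nb : ℤ) :
    ¬ (((⊤ : WithTop ℤ) : Zbar) ≤ ((nb : WithTop ℤ) : Zbar)) := by
  intro h1
  have h3 : ((⊤ : WithTop ℤ) : Zbar) = ((nb : WithTop ℤ) : Zbar) :=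
    le_antisymm h1 (le_coe_top' _)
  have h4 : (⊤ : WithTop ℤ) = (nb : WithTop ℤ) := WithBot.coe_injective h3
  exact (WithTop.coe_ne_top (a := nb)) h4.symm

lemma exists_greatest_WBT (S : Set Zbar) (hS : S.Nonempty)
    (b c : Zbar) (hb : ∀ s ∈ S, s ≤ b) (hbc : b < c) :
    ∃ m ∈ S, ∀ s ∈ S, s ≤ m := by
  induction b using WithBot.recBotCoe with
  | bot =>
    obtain ⟨m, hm⟩ := hS
    exact ⟨m, hm, fun s hs => (hb s hs).trans bot_le⟩
  | coe tb =>
    induction tb using WithTop.recTopCoe with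
    | top => exact absurd (le_coe_top' c) hbc.not_ge
    | coe nb =>
      set T : Set ℤ := {n : ℤ | (((n : WithTop ℤ) : Zbar)) ∈ S} with hT
      have hbd : ∀ n ∈ T, n ≤ nb := by
        intro n hn
        have := hb _ hn
        exact_mod_cast this
      by_cases hTne : T.Nonempty
      · obtain ⟨n0, hn0⟩ := hTne
        obtain ⟨m, hmT, hmax⟩ := Int.exists_greatest_of_bdd ⟨nb, fun z hz => hbd z hz⟩ ⟨n0, hn0⟩
        refine ⟨((m : WithTop ℤ) : Zbar), hmT, ?_⟩
        intro s hs
        induction s using WithBot.recBotCoe with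
        | bot => exact bot_le
        | coe ts =>
          induction ts using WithTop.recTopCoe with
          | top => exact absurd (hb _ hs) (not_coe_top_le_coe_int nb)
          | coe ns =>
            have : ns ∈ T := hs
            exact_mod_cast hmax ns this
      · have hall : ∀ s ∈ S, s = ⊥ := by
          intro s hs
          induction s using WithBot.recBotCoe with
          | bot => rfl
          | coe ts =>
            exfalso
            induction ts using WithTop.recTopCoe with
            | top => exact absurd (hb _ hs) (not_coe_top_le_coe_int nb)
            | coe ns => exact hTne ⟨ns, hs⟩
        obtain ⟨m, hm⟩ := hS
        exact ⟨m, hm, fun s hs => by rw [hall s hs, hall m hm]⟩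

lemma exists_least_WBT (S : Set Zbar) (hS : S.Nonempty)
    (b c : Zbar) (hb : ∀ s ∈ S, b ≤ s) (hbc : c < b) :
    ∃ m ∈ S, ∀ s ∈ S, m ≤ s := by
  induction b using WithBot.recBotCoe with
  | bot => exact absurd bot_le hbc.not_ge
  | coe tb =>
    -- every element of S is ≥ ↑tb > ⊥, so of the form ↑ts
    have hS' : ∀ s ∈ S, ∃ ts : WithTop ℤ, s = (ts : Zbar) := by
      intro s hs
      induction s using WithBot.recBotCoe with
      | bot => exact absurd (hb _ hs) (by simp)
      | coe ts => exact ⟨ts, rfl⟩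
    by_cases hTop : (((⊤ : WithTop ℤ) : Zbar)) ∈ S ∧ ∀ s ∈ S, s = ((⊤ : WithTop ℤ) : Zbar)
    · exact ⟨_, hTop.1, fun s hs => by rw [hTop.2 s hs]⟩
    · -- there is an element of S that is an integer
      have hint : ∃ n : ℤ, ((n : WithTop ℤ) : Zbar) ∈ S := by
        by_contra hno
        push_neg at hno
        apply hTop
        have hall : ∀ s ∈ S, s = ((⊤ : WithTop ℤ) : Zbar) := by
          intro s hs
          obtain ⟨ts, rfl⟩ := hS' s hs
          induction ts using WithTop.recTopCoe with
          | top => rfl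
          | coe ns => exact absurd hs (hno ns)
        obtain ⟨s, hs⟩ := hS
        exact ⟨(hall s hs) ▸ hs, hall⟩
      obtain ⟨n0, hn0⟩ := hint
      -- lower bound tb must be an integer or the set is bounded below anyway
      have hlbd : ∃ nb : ℤ, ∀ n : ℤ, ((n : WithTop ℤ) : Zbar) ∈ S → nb ≤ n := by
        induction tb using WithTop.recTopCoe with
        | top => exact absurd (hb _ hn0) (not_coe_top_le_coe_int n0)
        | coe nb =>
          refine ⟨nb, fun n hn => ?_⟩
          have := hb _ hn
          exact_mod_cast this
      obtain ⟨nb, hnb⟩ := hlbd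
      obtain ⟨m, hmT, hmin⟩ := Int.exists_least_of_bdd ⟨nb, fun z hz => hnb z hz⟩ ⟨n0, hn0⟩
      refine ⟨((m : WithTop ℤ) : Zbar), hmT, ?_⟩
      intro s hs
      obtain ⟨ts, rfl⟩ := hS' s hs
      induction ts using WithTop.recTopCoe with
      | top => exact le_coe_top' _
      | coe ns => exact_mod_cast hmin ns hs

variable {α : Type*} [Preorder α]

lemma exists_greatest_of_orderIso (φ : α ≃o Zbar) (S : Set α) (hS : S.Nonempty)
    (b c : α) (hb : ∀ s ∈ S, s ≤ b) (hbc : b < c) :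
    ∃ m ∈ S, ∀ s ∈ S, s ≤ m := by
  obtain ⟨m', hm'S, hm'⟩ := exists_greatest_WBT (φ '' S) (hS.image φ) (φ b) (φ c)
    (by rintro s ⟨a, haS, rfl⟩; exact φ.le_iff_le.mpr (hb a haS))
    (φ.lt_iff_lt.mpr hbc)
  obtain ⟨m, hmS, rfl⟩ := hm'S
  exact ⟨m, hmS, fun s hs => φ.le_iff_le.mp (hm' _ ⟨s, hs, rfl⟩)⟩

lemma exists_least_of_orderIso (φ : α ≃o Zbar) (S : Set α) (hS : S.Nonempty)
    (b c : α) (hb : ∀ s ∈ S, b ≤ s) (hbc : c < b) :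
    ∃ m ∈ S, ∀ s ∈ S, m ≤ s := by
  obtain ⟨m', hm'S, hm'⟩ := exists_least_WBT (φ '' S) (hS.image φ) (φ b) (φ c)
    (by rintro s ⟨a, haS, rfl⟩; exact φ.le_iff_le.mpr (hb a haS))
    (φ.lt_iff_lt.mpr hbc)
  obtain ⟨m, hmS, rfl⟩ := hm'S
  exact ⟨m, hmS, fun s hs => φ.le_iff_le.mp (hm' _ ⟨s, hs, rfl⟩)⟩

end ZChain
section Auto
variable {M : Type*} [PartialOrder M]

lemma orderIso_of_graphAuto (h2lev : IsTwoLevel M) (hconn : (compGraph M).Connected)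
    (g : compGraph M ≃g compGraph M) (v : M) (hgv : g v = v) (w : M) (hvw : v ≠ w) :
    ∃ e : M ≃o M, ∀ z, e z = g z := by
  have hnbr : ∀ z : M, ∃ z', (compGraph M).Adj z z' := by
    intro z
    rcases eq_or_ne z v with rfl | hz
    · obtain ⟨p⟩ := hconn.preconnected z w
      cases p with
      | nil => exact absurd rfl hvw
      | cons h _ => exact ⟨_, h⟩
    · obtain ⟨p⟩ := hconn.preconnected z v
      cases p with
      | nil => exact absurd rfl hz
      | cons h _ => exact ⟨_, h⟩
  have hside : ∀ a b : M, (compGraph M).Adj a b → (IsMin a ↔ ¬ IsMin b) := by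
    intro a b hab
    rcases (show a < b ∨ b < a from hab) with h | h
    · constructor
      · intro _ hbmin
        exact h.not_ge (hbmin h.le)
      · intro _
        exact (h2lev a).resolve_right (fun hmax => hmax.not_lt h)
    · have h1 : ¬ IsMin a := fun hamin => h.not_ge (hamin h.le)
      have h2 : IsMin b := (h2lev b).resolve_right (fun hmax => hmax.not_lt h)
      tauto
  have hkey : ∀ z : M, IsMin (g z) ↔ IsMin z := by
    suffices h : ∀ a b : M, ∀ _ : (compGraph M).Walk a b,
        (IsMin (g a) ↔ IsMin a) → (IsMin (g b) ↔ IsMin b) by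
      intro z
      obtain ⟨p⟩ := hconn.preconnected v z
      exact h v z p (by rw [hgv])
    intro a b p
    induction p with
    | nil => exact id
    | cons h' p ih =>
      intro ha
      apply ih
      have h1 := hside _ _ h'
      have h2 := hside _ _ ((SimpleGraph.Iso.map_adj_iff g).mpr h')
      tauto
  have hlt : ∀ a b : M, a < b → g a < g b := by
    intro a b hab
    have hadj : (compGraph M).Adj (g a) (g b) :=
      (SimpleGraph.Iso.map_adj_iff g).mpr (Or.inl hab : a < b ∨ b < a)
    have hmina : IsMin (g a) := (hkey a).mpr ((h2lev a).resolve_right fun h => h.not_lt hab)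
    rcases (show g a < g b ∨ g b < g a from hadj) with h | h
    · exact h
    · exact absurd (hmina h.le) h.not_ge
  have hlt_iff : ∀ a b : M, a < b ↔ g a < g b := by
    intro a b
    refine ⟨hlt a b, fun h => ?_⟩
    have hadj : (compGraph M).Adj a b := (SimpleGraph.Iso.map_adj_iff g).mp (Or.inl h : g a < g b ∨ g b < g a)
    rcases (show a < b ∨ b < a from hadj) with h' | h'
    · exact h'
    · exact absurd (hlt b a h') h.asymm
  refine ⟨{ toEquiv := g.toEquiv, map_rel_iff' := ?_ }, fun z => rfl⟩
  intro a b
  show g a ≤ g b ↔ a ≤ b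
  rw [le_iff_lt_or_eq, le_iff_lt_or_eq, ← hlt_iff]
  have : g a = g b ↔ a = b := ⟨fun h => g.injective h, fun h => by rw [h]⟩
  rw [this]

lemma exists_orderIso_of_twoArcs (h2lev : IsTwoLevel M) (hconn : (compGraph M).Connected)
    (h2arc : LocallyTwoArcTransitive (compGraph M)) {v u₁ w₁ u₂ w₂ : M}
    (h1 : IsTwoArc (compGraph M) v u₁ w₁) (h2 : IsTwoArc (compGraph M) v u₂ w₂) :
    ∃ e : M ≃o M, e v = v ∧ e u₁ = u₂ ∧ e w₁ = w₂ := by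
  obtain ⟨g, hgv, hgu, hgw⟩ := h2arc v u₁ w₁ u₂ w₂ h1 h2
  have hne : v ≠ u₁ := h1.1.ne
  obtain ⟨e, he⟩ := orderIso_of_graphAuto h2lev hconn g v hgv u₁ hne
  exact ⟨e, by rw [he, hgv], by rw [he, hgu], by rw [he, hgw]⟩

end Auto
section Between
variable {M : Type*} [PartialOrder M]

lemma principal_mem_MPlus (a : M) : principalCut a ∈ MPlus M :=
  Or.inl (Or.inl ⟨a, rfl⟩)

lemma exists_between_cut
    (hint : ∀ x y : M, x ∈ minSet M → y ∈ maxSet M → x < y →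
      Nonempty (↥(MPlus M ∩ Set.Icc (principalCut x) (principalCut y)) ≃o
        WithBot (WithTop ℤ)))
    (x y : M) (hx : IsMin x) (hy : IsMax y) (hxy : x < y) :
    ∃ q : DMC M, q ∈ MPlus M ∧ principalCut x < q ∧ q < principalCut y := by
  obtain ⟨φ⟩ := hint x y hx hy hxy
  have hPxy : principalCut x ≤ principalCut y := principalCut_le_iff.mpr hxy.le
  set C := ↥(MPlus M ∩ Set.Icc (principalCut x) (principalCut y)) with hC
  set pX : C := ⟨principalCut x, ⟨principal_mem_MPlus x, le_refl _, hPxy⟩⟩ with hpX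
  set pY : C := ⟨principalCut y, ⟨principal_mem_MPlus y, hPxy, le_refl _⟩⟩ with hpY
  have hleast : ∀ r : C, pX ≤ r := fun r => r.2.2.1
  have hgreatest : ∀ r : C, r ≤ pY := fun r => r.2.2.2
  set q0 : C := φ.symm ((((0 : ℤ) : WithTop ℤ)) : WithBot (WithTop ℤ)) with hq0
  have hne1 : pX ≠ q0 := by
    intro h
    have h1 : pX ≤ φ.symm ((((-1 : ℤ) : WithTop ℤ)) : WithBot (WithTop ℤ)) := hleast _
    rw [h] at h1
    have h2 := φ.le_iff_le.mpr h1
    rw [OrderIso.apply_symm_apply, OrderIso.apply_symm_apply] at h2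
    have h3 : (0 : ℤ) ≤ -1 := by exact_mod_cast h2
    omega
  have hne2 : q0 ≠ pY := by
    intro h
    have h1 : φ.symm ((((1 : ℤ) : WithTop ℤ)) : WithBot (WithTop ℤ)) ≤ pY := hgreatest _
    rw [← h] at h1
    have h2 := φ.le_iff_le.mpr h1
    rw [OrderIso.apply_symm_apply, OrderIso.apply_symm_apply] at h2
    have h3 : (1 : ℤ) ≤ 0 := by exact_mod_cast h2
    omega
  refine ⟨q0.val, q0.2.1, ?_, ?_⟩
  · exact lt_of_le_of_ne q0.2.2.1 (fun h => hne1 (Subtype.ext h))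
  · exact lt_of_le_of_ne q0.2.2.2 (fun h => hne2 (Subtype.ext h))

/-- An element of a cut `q` strictly below `Iic y` : the cut cannot contain `y`,
and must have a second upper bound. -/
lemma cut_lt_principal_facts {q : DMC M} {y : M} (hq : q < principalCut y) :
    y ∉ q.val ∧ ∃ y' ∈ upperBounds q.val, y' ≠ y := by
  have hsub : q.val ⊆ Set.Iic y := hq.le
  have hymem : y ∉ q.val := by
    intro hy
    exact hq.ne (Subtype.ext (cut_mem_imp_eq_Iic q.2 hy hsub))
  refine ⟨hymem, ?_⟩
  by_contra h
  push_neg at h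
  have hub : upperBounds q.val = {y} := by
    apply Set.Subset.antisymm
    · intro u hu; exact h u hu
    · rintro u rfl; exact fun z hz => hsub hz
  exact hq.ne (Subtype.ext (cut_eq_Iic_of_ub q.2 hub))

end Between
section NoPrincipalRam
variable {M : Type*} [PartialOrder M]

lemma principal_not_downRam (h2lev : IsTwoLevel M) (hconn : (compGraph M).Connected)
    (h2arc : LocallyTwoArcTransitive (compGraph M))
    (hint : ∀ x y : M, x ∈ minSet M → y ∈ maxSet M → x < y →
      Nonempty (↥(MPlus M ∩ Set.Icc (principalCut x) (principalCut y)) ≃o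
        WithBot (WithTop ℤ)))
    (c : M) : principalCut c ∉ downRam M := by
  rintro ⟨x1, x2, h12, h21, hlub⟩
  have hne12 : x1 ≠ x2 := fun h => h12 (h ▸ le_refl x1)
  have hx1c : x1 ≤ c := principalCut_le_iff.mp (hlub.1 (Set.mem_insert _ _))
  have hx2c : x2 ≤ c := principalCut_le_iff.mp (hlub.1 (Set.mem_insert_of_mem _ rfl))
  have hx1lt : x1 < c := lt_of_le_of_ne hx1c (fun h => h21 (h ▸ hx2c))
  have hx2lt : x2 < c := lt_of_le_of_ne hx2c (fun h => h12 (h ▸ hx1c))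
  have hminx1 : IsMin x1 := isMin_of_lt h2lev hx1lt
  have hmaxc : IsMax c := isMax_of_lt h2lev hx1lt
  have hcub : c ∈ upperBounds ({x1, x2} : Set M) := by
    rintro z (rfl | rfl); exacts [hx1c, hx2c]
  have hU : upperBounds ({x1, x2} : Set M) = {c} := by
    have hcut : IsCut (lowerBounds (upperBounds ({x1, x2} : Set M))) :=
      isCut_lowerBounds ⟨c, hcub⟩ ⟨x1, fun u hu => hu (Set.mem_insert _ _)⟩
    set S0 : DMC M := ⟨_, hcut⟩ with hS0
    have hS0ub : S0 ∈ upperBounds {principalCut x1, principalCut x2} := by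
      rintro p (rfl | rfl)
      · intro z hz u hu
        exact le_trans hz (hu (Set.mem_insert _ _))
      · intro z hz u hu
        exact le_trans hz (hu (Set.mem_insert_of_mem _ rfl))
    have hle := hlub.2 hS0ub
    have hcS0 : c ∈ S0.val := hle (le_refl c)
    apply Set.Subset.antisymm
    · intro u hu
      exact Set.mem_singleton_iff.mpr (le_antisymm (hmaxc (hcS0 hu)) (hcS0 hu))
    · rintro u rfl; exact hcub
  obtain ⟨q, hqM, hq1, hq2⟩ := exists_between_cut hint x1 c hminx1 hmaxc hx1lt
  have hsub : q.val ⊆ Set.Iic c := hq2.le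
  obtain ⟨hcq, y', hy'ub, hy'ne⟩ := cut_lt_principal_facts hq2
  have hnsub : ¬ q.val ⊆ Set.Iic x1 := fun h => hq1.not_ge h
  obtain ⟨x', hx'q, hx'⟩ := Set.not_subset.mp hnsub
  have hx'ne : x' ≠ x1 := fun h => hx' (by rw [h]; exact Set.mem_Iic.mpr le_rfl)
  have hx'c : x' < c := lt_of_le_of_ne (hsub hx'q) (fun h => hcq (h ▸ hx'q))
  have hx1q : x1 ∈ q.val := hq1.le (Set.mem_Iic.mpr (le_refl x1))
  have hy'x1 : x1 ≤ y' := hy'ub hx1q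
  have hy'x' : x' ≤ y' := hy'ub hx'q
  apply hy'ne
  rcases eq_or_ne x' x2 with rfl | hne2
  · have hmem : y' ∈ upperBounds ({x1, x'} : Set M) := by
      rintro z (rfl | rfl); exacts [hy'x1, hy'x']
    exact Set.mem_singleton_iff.mp (hU ▸ hmem)
  · have harc1 : IsTwoArc (compGraph M) x1 c x2 := ⟨(Or.inl hx1lt : x1 < c ∨ c < x1), (Or.inr hx2lt : c < x2 ∨ x2 < c), hne12⟩
    have harc2 : IsTwoArc (compGraph M) x1 c x' :=
      ⟨(Or.inl hx1lt : x1 < c ∨ c < x1), (Or.inr hx'c : c < x' ∨ x' < c), fun h => hx'ne h.symm⟩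
    obtain ⟨e, hev, heu, hew⟩ := exists_orderIso_of_twoArcs h2lev hconn h2arc harc1 harc2
    have hU' : ∀ u : M, x1 ≤ u → x' ≤ u → u = c := by
      intro u h1 h2
      have hm : e.symm u ∈ upperBounds ({x1, x2} : Set M) := by
        rintro z (rfl | rfl)
        · exact e.le_symm_apply.mpr (by rw [hev]; exact h1)
        · exact e.le_symm_apply.mpr (by rw [hew]; exact h2)
      have h3 : e.symm u = c := Set.mem_singleton_iff.mp (hU ▸ hm)
      rw [e.symm_apply_eq, heu] at h3
      exact h3
    exact hU' y' hy'x1 hy'x'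

lemma principal_not_upRam (h2lev : IsTwoLevel M) (hconn : (compGraph M).Connected)
    (h2arc : LocallyTwoArcTransitive (compGraph M))
    (hint : ∀ x y : M, x ∈ minSet M → y ∈ maxSet M → x < y →
      Nonempty (↥(MPlus M ∩ Set.Icc (principalCut x) (principalCut y)) ≃o
        WithBot (WithTop ℤ)))
    (c : M) : principalCut c ∉ upRam M := by
  rintro ⟨a, b, hab, hba, hglb⟩
  have hneab : a ≠ b := fun h => hab (h ▸ le_refl a)
  have hca : c ≤ a := principalCut_le_iff.mp (hglb.1 (Set.mem_insert _ _))
  have hcb : c ≤ b := principalCut_le_iff.mp (hglb.1 (Set.mem_insert_of_mem _ rfl))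
  have hclta : c < a := lt_of_le_of_ne hca (fun h => hab (h ▸ hcb))
  have hcltb : c < b := lt_of_le_of_ne hcb (fun h => hba (h ▸ hca))
  have hminc : IsMin c := isMin_of_lt h2lev hclta
  have hmaxa : IsMax a := isMax_of_lt h2lev hclta
  have hD : ∀ z : M, z ≤ a → z ≤ b → z = c := by
    have hcut : IsCut (lowerBounds ({a, b} : Set M)) :=
      isCut_lowerBounds ⟨a, Set.mem_insert _ _⟩
        ⟨c, by rintro z (rfl | rfl); exacts [hca, hcb]⟩
    set Dc : DMC M := ⟨_, hcut⟩ with hDc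
    have hDlb : Dc ∈ lowerBounds {principalCut a, principalCut b} := by
      rintro p (rfl | rfl)
      · exact fun z hz => hz (Set.mem_insert _ _)
      · exact fun z hz => hz (Set.mem_insert_of_mem _ rfl)
    have hle := hglb.2 hDlb
    intro z hza hzb
    have hz : z ∈ Dc.val := by rintro w (rfl | rfl); exacts [hza, hzb]
    have hzc : z ≤ c := hle hz
    exact le_antisymm hzc (hminc hzc)
  obtain ⟨q, hqM, hq1, hq2⟩ := exists_between_cut hint c a hminc hmaxa hclta
  have hsub : q.val ⊆ Set.Iic a := hq2.le
  obtain ⟨haq, y', hy'ub, hy'ne⟩ := cut_lt_principal_facts hq2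
  have hnsub : ¬ q.val ⊆ Set.Iic c := fun h => hq1.not_ge h
  obtain ⟨c', hc'q, hc'⟩ := Set.not_subset.mp hnsub
  have hc'ne : c' ≠ c := fun h => hc' (by rw [h]; exact Set.mem_Iic.mpr le_rfl)
  have hc'a : c' < a := lt_of_le_of_ne (hsub hc'q) (fun h => haq (h ▸ hc'q))
  have hcq : c ∈ q.val := hq1.le (Set.mem_Iic.mpr (le_refl c))
  have hy'c : c ≤ y' := hy'ub hcq
  have hy'c' : c' ≤ y' := hy'ub hc'q
  have hcy' : c < y' := by
    rcases lt_or_eq_of_le hy'c with h | h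
    · exact h
    · exfalso
      have h2 : c' ≤ c := hy'c'.trans (le_of_eq h.symm)
      exact hc'ne (le_antisymm h2 (hminc h2))
  apply hc'ne
  rcases eq_or_ne y' b with rfl | hneb
  · exact hD c' hc'a.le hy'c'
  · have harc1 : IsTwoArc (compGraph M) a c b := ⟨(Or.inr hclta : a < c ∨ c < a), (Or.inl hcltb : c < b ∨ b < c), hneab⟩
    have harc2 : IsTwoArc (compGraph M) a c y' :=
      ⟨(Or.inr hclta : a < c ∨ c < a), (Or.inl hcy' : c < y' ∨ y' < c), fun h => hy'ne h.symm⟩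
    obtain ⟨e, hev, heu, hew⟩ := exists_orderIso_of_twoArcs h2lev hconn h2arc harc1 harc2
    have hD' : ∀ z : M, z ≤ a → z ≤ y' → z = c := by
      intro z h1 h2
      have ha' : e.symm z ≤ a := e.symm_apply_le.mpr (by rw [hev]; exact h1)
      have hb' : e.symm z ≤ b := e.symm_apply_le.mpr (by rw [hew]; exact h2)
      have h3 := hD (e.symm z) ha' hb'
      rw [e.symm_apply_eq, heu] at h3
      exact h3
    exact hD' c' hc'a.le hy'c'

end NoPrincipalRam
section NonPrincipal
variable {M : Type*} [PartialOrder M]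

lemma nonprincipal_mem_downRam (h2lev : IsTwoLevel M)
    (hint : ∀ x y : M, x ∈ minSet M → y ∈ maxSet M → x < y →
      Nonempty (↥(MPlus M ∩ Set.Icc (principalCut x) (principalCut y)) ≃o
        WithBot (WithTop ℤ)))
    (Jc : DMC M) (hJp : Jc ∉ principalSet M) : Jc ∈ downRam M := by
  have hJ := Jc.2
  obtain ⟨x1, hx1J⟩ := hJ.1
  have hlt : ∀ x ∈ Jc.val, ∀ u ∈ upperBounds Jc.val, x < u := by
    intro x hx u hu
    refine lt_of_le_of_ne (hu hx) (fun h => hJp ?_)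
    exact mem_principalSet_of_val x (cut_eq_Iic_of_greatest Jc.2 hx (h ▸ hu))
  obtain ⟨y0, hy0⟩ := hJ.2.1
  have hx1y0 : x1 < y0 := hlt _ hx1J _ hy0
  have hminx1 : IsMin x1 := isMin_of_lt h2lev hx1y0
  have hmaxy0 : IsMax y0 := isMax_of_lt h2lev hx1y0
  have hu2 : ∃ u2 ∈ upperBounds Jc.val, u2 ≠ y0 := by
    by_contra h
    push_neg at h
    apply hJp
    apply mem_principalSet_of_val y0
    apply cut_eq_Iic_of_ub Jc.2
    exact Set.Subset.antisymm (fun u hu => h u hu) (by rintro u rfl; exact hy0)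
  obtain ⟨u2, hu2ub, hu2ne⟩ := hu2
  have hmaxu2 : IsMax u2 := isMax_of_lt h2lev (hlt _ hx1J _ hu2ub)
  obtain ⟨φ⟩ := hint x1 y0 hminx1 hmaxy0 hx1y0
  set C := ↥(MPlus M ∩ Set.Icc (principalCut x1) (principalCut y0)) with hCdef
  have hbcut : IsCut (lowerBounds ({y0, u2} : Set M)) :=
    isCut_lowerBounds ⟨y0, Set.mem_insert _ _⟩
      ⟨x1, by rintro z (rfl | rfl); exacts [hx1y0.le, (hlt _ hx1J _ hu2ub).le]⟩
  set bD : DMC M := ⟨_, hbcut⟩ with hbDdef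
  have hbup : bD ∈ upRam M := by
    refine ⟨y0, u2, ?_, ?_, ?_, ?_⟩
    · intro h; exact hu2ne (le_antisymm (hmaxy0 h) h)
    · intro h; exact hu2ne (le_antisymm h (hmaxu2 h))
    · rintro p (rfl | rfl)
      · exact fun z hz => hz (Set.mem_insert _ _)
      · exact fun z hz => hz (Set.mem_insert_of_mem _ rfl)
    · intro K hK z hz
      rintro w (rfl | rfl)
      · exact hK (Set.mem_insert _ _) hz
      · exact hK (Set.mem_insert_of_mem _ rfl) hz
  have hJsubb : Jc.val ⊆ bD.val := by
    intro z hz; rintro w (rfl | rfl); exacts [hy0 hz, hu2ub hz]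
  have hbC : bD ∈ MPlus M ∩ Set.Icc (principalCut x1) (principalCut y0) := by
    refine ⟨Or.inl (Or.inr hbup), ?_, ?_⟩
    · exact fun z hz => hJsubb (Iic_subset_cut Jc.2 hx1J hz)
    · exact fun z hz => hz (Set.mem_insert _ _)
  set bC : C := ⟨bD, hbC⟩ with hbCdef
  set pY : C := ⟨principalCut y0,
    ⟨principal_mem_MPlus y0, principalCut_le_iff.mpr hx1y0.le, le_refl _⟩⟩ with hpYdef
  have hblt : bC < pY := by
    refine lt_of_le_of_ne (fun z hz => hz (Set.mem_insert _ _)) (fun h => ?_)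
    have h1 : bD = principalCut y0 := congrArg Subtype.val h
    have h2 : y0 ∈ bD.val := by rw [h1]; exact Set.mem_Iic.mpr le_rfl
    have h' : y0 ≤ u2 := h2 (Set.mem_insert_of_mem _ rfl)
    exact hu2ne (le_antisymm (hmaxy0 h') h')
  have hkey : ∀ x, x ∈ Jc.val →
      ∃ p : C, p.val.val = lowerBounds (upperBounds ({x1, x} : Set M)) := by
    intro x hx
    have hminx : IsMin x := isMin_of_lt h2lev (hlt _ hx _ hy0)
    have hcut : IsCut (lowerBounds (upperBounds ({x1, x} : Set M))) :=
      isCut_lowerBounds ⟨y0, by rintro z (rfl | rfl); exacts [hy0 hx1J, hy0 hx]⟩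
        ⟨x1, fun u hu => hu (Set.mem_insert _ _)⟩
    have hIic : Set.Iic x1 ⊆ lowerBounds (upperBounds ({x1, x} : Set M)) :=
      fun z hz u hu => le_trans hz (hu (Set.mem_insert _ _))
    have hle0 : lowerBounds (upperBounds ({x1, x} : Set M)) ⊆ Set.Iic y0 :=
      fun z hz => hz (by rintro t (rfl | rfl); exacts [hy0 hx1J, hy0 hx])
    have hmem : (⟨_, hcut⟩ : DMC M) ∈ MPlus M := by
      rcases eq_or_ne x x1 with rfl | hne
      · refine Or.inl (Or.inl (mem_principalSet_of_val x ?_))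
        show lowerBounds (upperBounds ({x, x} : Set M)) = Set.Iic x
        rw [Set.pair_eq_singleton, lB_uB_singleton]
      · refine Or.inr ⟨x1, x, fun h => hne (le_antisymm (hminx h) h), fun h =>
          hne (le_antisymm h (hminx1 h)), ?_, ?_⟩
        · rintro p (rfl | rfl)
          · exact hIic
          · exact fun z hz u hu => le_trans hz (hu (Set.mem_insert_of_mem _ rfl))
        · intro K hK z hz
          rw [← K.2.2.2]
          intro w hw
          refine hz ?_
          rintro t (rfl | rfl)
          · exact hw (hK (Set.mem_insert _ _) (Set.mem_Iic.mpr le_rfl))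
          · exact hw (hK (Set.mem_insert_of_mem _ rfl) (Set.mem_Iic.mpr le_rfl))
    exact ⟨⟨⟨_, hcut⟩, hmem, hIic, hle0⟩, rfl⟩
  set A : Set C :=
    {p | ∃ x ∈ Jc.val, p.val.val = lowerBounds (upperBounds ({x1, x} : Set M))} with hAdef
  have hAne : A.Nonempty := by
    obtain ⟨p, hp⟩ := hkey x1 hx1J
    exact ⟨p, x1, hx1J, hp⟩
  have hbound : ∀ p ∈ A, p ≤ bC := by
    rintro p ⟨x, hx, hpv⟩
    show p.val.val ⊆ bD.val
    rw [hpv]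
    intro z hz
    have hzJ : z ∈ Jc.val := by
      rw [← Jc.2.2.2]
      intro w hw
      exact hz (by rintro t (rfl | rfl); exacts [hw hx1J, hw hx])
    exact hJsubb hzJ
  obtain ⟨m, hmA, hmax⟩ := exists_greatest_of_orderIso φ A hAne bC pY hbound hblt
  obtain ⟨xs, hxsJ, hm⟩ := hmA
  have hmJ : m.val.val = Jc.val := by
    apply Set.Subset.antisymm
    · rw [hm]
      intro z hz
      rw [← Jc.2.2.2]
      intro w hw
      exact hz (by rintro t (rfl | rfl); exacts [hw hx1J, hw hxsJ])
    · intro x hx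
      obtain ⟨p, hp⟩ := hkey x hx
      have hle : p ≤ m := hmax p ⟨x, hx, hp⟩
      apply hle
      rw [hp]
      exact subset_lowerBounds_upperBounds _ (Set.mem_insert_of_mem _ rfl)
  have hminxs : IsMin xs := isMin_of_lt h2lev (hlt _ hxsJ _ hy0)
  have hnexs : xs ≠ x1 := by
    intro h
    apply hJp
    apply mem_principalSet_of_val x1
    rw [← hmJ, hm, h, Set.pair_eq_singleton, lB_uB_singleton]
  refine ⟨x1, xs, fun h => hnexs (le_antisymm (hminxs h) h),
    fun h => hnexs (le_antisymm h (hminx1 h)), ?_, ?_⟩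
  · rintro p (rfl | rfl)
    · exact Iic_subset_cut Jc.2 hx1J
    · exact Iic_subset_cut Jc.2 hxsJ
  · intro K hK
    show Jc.val ⊆ K.val
    rw [← hmJ, hm]
    intro z hz
    rw [← K.2.2.2]
    intro w hw
    refine hz ?_
    rintro t (rfl | rfl)
    · exact hw (hK (Set.mem_insert _ _) (Set.mem_Iic.mpr le_rfl))
    · exact hw (hK (Set.mem_insert_of_mem _ rfl) (Set.mem_Iic.mpr le_rfl))

lemma nonprincipal_mem_upRam (h2lev : IsTwoLevel M)
    (hint : ∀ x y : M, x ∈ minSet M → y ∈ maxSet M → x < y →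
      Nonempty (↥(MPlus M ∩ Set.Icc (principalCut x) (principalCut y)) ≃o
        WithBot (WithTop ℤ)))
    (Jc : DMC M) (hJp : Jc ∉ principalSet M) : Jc ∈ upRam M := by
  have hJ := Jc.2
  obtain ⟨x1, hx1J⟩ := hJ.1
  have hlt : ∀ x ∈ Jc.val, ∀ u ∈ upperBounds Jc.val, x < u := by
    intro x hx u hu
    refine lt_of_le_of_ne (hu hx) (fun h => hJp ?_)
    exact mem_principalSet_of_val x (cut_eq_Iic_of_greatest Jc.2 hx (h ▸ hu))
  obtain ⟨y0, hy0⟩ := hJ.2.1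
  have hx1y0 : x1 < y0 := hlt _ hx1J _ hy0
  have hminx1 : IsMin x1 := isMin_of_lt h2lev hx1y0
  have hmaxy0 : IsMax y0 := isMax_of_lt h2lev hx1y0
  have hx2 : ∃ x2 ∈ Jc.val, x2 ≠ x1 := by
    by_contra h
    push_neg at h
    apply hJp
    apply mem_principalSet_of_val x1
    have heq : Jc.val = {x1} :=
      Set.Subset.antisymm (fun z hz => h z hz) (by rintro z rfl; exact hx1J)
    rw [heq, Iic_isMin hminx1]
  obtain ⟨x2, hx2J, hx2ne⟩ := hx2
  have hminx2 : IsMin x2 := isMin_of_lt h2lev (hlt _ hx2J _ hy0)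
  obtain ⟨φ⟩ := hint x1 y0 hminx1 hmaxy0 hx1y0
  set C := ↥(MPlus M ∩ Set.Icc (principalCut x1) (principalCut y0)) with hCdef
  have ha0cut : IsCut (lowerBounds (upperBounds ({x1, x2} : Set M))) :=
    isCut_lowerBounds ⟨y0, by rintro z (rfl | rfl); exacts [hy0 hx1J, hy0 hx2J]⟩
      ⟨x1, fun u hu => hu (Set.mem_insert _ _)⟩
  set a0 : DMC M := ⟨_, ha0cut⟩ with ha0def
  have ha0down : a0 ∈ downRam M := by
    refine ⟨x1, x2, fun h => hx2ne (le_antisymm (hminx2 h) h),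
      fun h => hx2ne (le_antisymm h (hminx1 h)), ?_, ?_⟩
    · rintro p (rfl | rfl)
      · exact fun z hz u hu => le_trans hz (hu (Set.mem_insert _ _))
      · exact fun z hz u hu => le_trans hz (hu (Set.mem_insert_of_mem _ rfl))
    · intro K hK z hz
      rw [← K.2.2.2]
      intro w hw
      refine hz ?_
      rintro t (rfl | rfl)
      · exact hw (hK (Set.mem_insert _ _) (Set.mem_Iic.mpr le_rfl))
      · exact hw (hK (Set.mem_insert_of_mem _ rfl) (Set.mem_Iic.mpr le_rfl))
  have ha0J : a0.val ⊆ Jc.val := by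
    intro z hz
    rw [← Jc.2.2.2]
    intro w hw
    exact hz (by rintro t (rfl | rfl); exacts [hw hx1J, hw hx2J])
  have ha0C : a0 ∈ MPlus M ∩ Set.Icc (principalCut x1) (principalCut y0) := by
    refine ⟨Or.inr ha0down, ?_, ?_⟩
    · exact fun z hz u hu => le_trans hz (hu (Set.mem_insert _ _))
    · exact fun z hz => hy0 (ha0J hz)
  set a0C : C := ⟨a0, ha0C⟩ with ha0Cdef
  set pX : C := ⟨principalCut x1,
    ⟨principal_mem_MPlus x1, le_refl _, principalCut_le_iff.mpr hx1y0.le⟩⟩ with hpXdef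
  have hpXlt : pX < a0C := by
    refine lt_of_le_of_ne (fun z hz u hu => le_trans hz (hu (Set.mem_insert _ _))) (fun h => ?_)
    have h1 : principalCut x1 = a0 := congrArg Subtype.val h
    have h2 : x2 ∈ a0.val :=
      subset_lowerBounds_upperBounds _ (Set.mem_insert_of_mem _ rfl)
    rw [← h1] at h2
    exact hx2ne (le_antisymm h2 (hminx1 h2))
  have hkeyB : ∀ u, u ∈ upperBounds Jc.val →
      ∃ p : C, p.val.val = lowerBounds ({y0, u} : Set M) := by
    intro u hu
    have hmaxu : IsMax u := isMax_of_lt h2lev (hlt _ hx1J _ hu)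
    have hcut : IsCut (lowerBounds ({y0, u} : Set M)) :=
      isCut_lowerBounds ⟨y0, Set.mem_insert _ _⟩
        ⟨x1, by rintro z (rfl | rfl); exacts [hx1y0.le, (hu hx1J)]⟩
    have hmem : (⟨_, hcut⟩ : DMC M) ∈ MPlus M := by
      rcases eq_or_ne u y0 with rfl | hne
      · refine Or.inl (Or.inl (mem_principalSet_of_val u ?_))
        show lowerBounds ({u, u} : Set M) = Set.Iic u
        rw [Set.pair_eq_singleton, lowerBounds_singleton]
      · refine Or.inl (Or.inr ⟨y0, u, fun h => hne (le_antisymm (hmaxy0 h) h),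
          fun h => hne (le_antisymm h (hmaxu h)), ?_, ?_⟩)
        · rintro p (rfl | rfl)
          · exact fun z hz => hz (Set.mem_insert _ _)
          · exact fun z hz => hz (Set.mem_insert_of_mem _ rfl)
        · intro K hK z hz
          rintro w (rfl | rfl)
          · exact hK (Set.mem_insert _ _) hz
          · exact hK (Set.mem_insert_of_mem _ rfl) hz
    refine ⟨⟨⟨_, hcut⟩, hmem, ?_, ?_⟩, rfl⟩
    · intro z hz
      rintro w (rfl | rfl)
      · exact le_trans hz hx1y0.le
      · exact le_trans hz (hu hx1J)
    · exact fun z hz => hz (Set.mem_insert _ _)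
  set B : Set C :=
    {p | ∃ u ∈ upperBounds Jc.val, p.val.val = lowerBounds ({y0, u} : Set M)} with hBdef
  have hBne : B.Nonempty := by
    obtain ⟨p, hp⟩ := hkeyB y0 hy0
    exact ⟨p, y0, hy0, hp⟩
  have hbound : ∀ p ∈ B, a0C ≤ p := by
    rintro p ⟨u, hu, hpv⟩
    show a0.val ⊆ p.val.val
    rw [hpv]
    intro z hz
    have hzJ : z ∈ Jc.val := ha0J hz
    rintro w (rfl | rfl); exacts [hy0 hzJ, hu hzJ]
  obtain ⟨m, hmB, hmin⟩ := exists_least_of_orderIso φ B hBne a0C pX hbound hpXlt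
  obtain ⟨us, husub, hm⟩ := hmB
  have hmaxus : IsMax us := isMax_of_lt h2lev (hlt _ hx1J _ husub)
  have hmJ : m.val.val = Jc.val := by
    apply Set.Subset.antisymm
    · intro z hz
      rw [← Jc.2.2.2]
      intro w hw
      obtain ⟨p, hp⟩ := hkeyB w hw
      have hle : m ≤ p := hmin p ⟨w, hw, hp⟩
      have hz2 : z ∈ p.val.val := hle hz
      rw [hp] at hz2
      exact hz2 (Set.mem_insert_of_mem _ rfl)
    · intro z hz
      rw [hm]
      rintro w (rfl | rfl); exacts [hy0 hz, husub hz]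
  have hneu : us ≠ y0 := by
    intro h
    apply hJp
    apply mem_principalSet_of_val y0
    rw [← hmJ, hm, h, Set.pair_eq_singleton, lowerBounds_singleton]
  refine ⟨y0, us, fun h => hneu (le_antisymm (hmaxy0 h) h),
    fun h => hneu (le_antisymm h (hmaxus h)), ?_, ?_⟩
  · rintro p (rfl | rfl)
    · exact fun z hz => hy0 hz
    · exact fun z hz => husub hz
  · intro K hK
    show K.val ⊆ Jc.val
    rw [← hmJ, hm]
    intro z hz
    rintro w (rfl | rfl)
    · exact hK (Set.mem_insert _ _) hz
    · exact hK (Set.mem_insert_of_mem _ rfl) hz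

end NonPrincipal
/-- If `M` is a countable 2-level poset with connected, locally
2-arc-transitive comparability graph, all of whose intervals `[x,y]^{M⁺}` are isomorphic to
`1 + ℤ + 1`, then `↑Ram(M) = ↓Ram(M) = M⁺ \ M = M^D \ M`; in particular `M⁺ = M^D` and no
element of `M` is a ramification point. -/
theorem ram_structure_of_Z_intervals (M : Type*) [PartialOrder M] [Countable M]
    (h2lev : IsTwoLevel M)
    (hconn : (compGraph M).Connected)
    (h2arc : LocallyTwoArcTransitive (compGraph M))
    (hint : ∀ x y : M, x ∈ minSet M → y ∈ maxSet M → x < y →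
      Nonempty (↥(MPlus M ∩ Set.Icc (principalCut x) (principalCut y)) ≃o
        WithBot (WithTop ℤ))) :
    upRam M = downRam M ∧
    upRam M = MPlus M \ principalSet M ∧
    MPlus M \ principalSet M = (principalSet M)ᶜ ∧
    MPlus M = Set.univ ∧
    principalSet M ∩ (upRam M ∪ downRam M) = ∅ := by
  have hup : upRam M = (principalSet M)ᶜ := by
    apply Set.Subset.antisymm
    · intro p hp hppr
      obtain ⟨c, rfl⟩ := hppr
      exact principal_not_upRam h2lev hconn h2arc hint c hp
    · intro p hp
      exact nonprincipal_mem_upRam h2lev hint p hp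
  have hdown : downRam M = (principalSet M)ᶜ := by
    apply Set.Subset.antisymm
    · intro p hp hppr
      obtain ⟨c, rfl⟩ := hppr
      exact principal_not_downRam h2lev hconn h2arc hint c hp
    · intro p hp
      exact nonprincipal_mem_downRam h2lev hint p hp
  have hMP : MPlus M = Set.univ := by
    ext p
    simp only [Set.mem_univ, iff_true]
    by_cases hp : p ∈ principalSet M
    · exact Or.inl (Or.inl hp)
    · exact Or.inl (Or.inr (nonprincipal_mem_upRam h2lev hint p hp))
  refine ⟨hup.trans hdown.symm, ?_, ?_, hMP, ?_⟩
  · rw [hMP, hup]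
    exact Set.compl_eq_univ_diff _
  · rw [hMP]
    exact (Set.compl_eq_univ_diff _).symm
  · apply Set.eq_empty_iff_forall_notMem.mpr
    rintro p ⟨hppr, hpr⟩
    obtain ⟨c, rfl⟩ := hppr
    rcases hpr with h | h
    · exact principal_not_upRam h2lev hconn h2arc hint c h
    · exact principal_not_downRam h2lev hconn h2arc hint c h
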